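/- Let v be positive C² with |∇_g v|_g > 0, let ε∈(0,1], ψ(s)=s·exp(−∫₀ˢ dt/(t^{1−ε}(1+t^ε))), and φ(s)=ψ(s)/(sψ'(s)). Then for the composed function ψ(v): F_{ψ(v)}^g = φ(v) F_v^g − φ'(v) v, where F_u^g := (uΔ_g u − |∇_g u|²_g)/|∇_g u|²_g. -/

import Mathlib

noncomputable section
open scoped BigOperators
open Real

variable {n : ℕ}

/-- partial derivative in coordinate direction `i`. -/
def pd (i : Fin n) (f : (Fin n → ℝ) → ℝ) (x : Fin n → ℝ) : ℝ :=
  fderiv ℝ f x (Pi.single i 1)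

/-- the g-gradient ∇_g f = g⁻¹ ∇f. -/
def gGrad (ginv : (Fin n → ℝ) → Matrix (Fin n) (Fin n) ℝ)
    (f : (Fin n → ℝ) → ℝ) (x : Fin n → ℝ) : Fin n → ℝ :=
  fun i => ∑ j, ginv x i j * pd j f x

/-- divergence of a vector field. -/
def vdiv (X : (Fin n → ℝ) → Fin n → ℝ) (x : Fin n → ℝ) : ℝ :=
  ∑ i, pd i (fun y => X y i) x

/-- the g-Laplacian Δ_g f = div(g⁻¹∇f). -/
def gLap (ginv : (Fin n → ℝ) → Matrix (Fin n) (Fin n) ℝ)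
    (f : (Fin n → ℝ) → ℝ) (x : Fin n → ℝ) : ℝ :=
  vdiv (gGrad ginv f) x

/-- the g-pairing ∇_g u ·_g ∇_g f = ⟨g⁻¹∇u, ∇f⟩;
    in particular `gPair ginv f f = |∇_g f|²_g`. -/
def gPair (ginv : (Fin n → ℝ) → Matrix (Fin n) (Fin n) ℝ)
    (u f : (Fin n → ℝ) → ℝ) (x : Fin n → ℝ) : ℝ :=
  ∑ i, ∑ j, ginv x i j * pd i u x * pd j f x


/-- B_v = v ∇_g v / |∇_g v|²_g. -/
def Bv (ginv : (Fin n → ℝ) → Matrix (Fin n) (Fin n) ℝ)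
    (v : (Fin n → ℝ) → ℝ) (x : Fin n → ℝ) : Fin n → ℝ :=
  fun i => v x / gPair ginv v v x * gGrad ginv v x i

/-- F_v^g = vΔ_g v/|∇_g v|²_g − 1. -/
def Fv (ginv : (Fin n → ℝ) → Matrix (Fin n) (Fin n) ℝ)
    (v : (Fin n → ℝ) → ℝ) (x : Fin n → ℝ) : ℝ :=
  v x * gLap ginv v x / gPair ginv v v x - 1

/-- S_v^{g,ij} = ½((div B_v − F_v^g) g^{ij}) − (∂_k B_v^j)g^{ki} − (∂_k B_v^i)g^{kj}
    + B_v^k ∂_k g^{ij}. -/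
def Sv (ginv : (Fin n → ℝ) → Matrix (Fin n) (Fin n) ℝ)
    (v : (Fin n → ℝ) → ℝ) (x : Fin n → ℝ) : Matrix (Fin n) (Fin n) ℝ :=
  Matrix.of fun i j =>
    (1 / 2) * ((vdiv (Bv ginv v) x - Fv ginv v x) * ginv x i j)
    - (∑ k, pd k (fun y => Bv ginv v y j) x * ginv x k i)
    - (∑ k, pd k (fun y => Bv ginv v y i) x * ginv x k j)
    + ∑ k, Bv ginv v x k * pd k (fun y => ginv y i j) x

/-- M_v^g = S_v^g g. -/
def Mv (ginv g : (Fin n → ℝ) → Matrix (Fin n) (Fin n) ℝ)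
    (v : (Fin n → ℝ) → ℝ) (x : Fin n → ℝ) : Matrix (Fin n) (Fin n) ℝ :=
  Sv ginv v x * g x
lemma integrable_weight (ε : ℝ) (hε : 0 < ε) (hε1 : ε ≤ 1) (s : ℝ) (hs : 0 < s) :
    IntervalIntegrable (fun t : ℝ => 1 / (t ^ (1 - ε) * (1 + t ^ ε)))
      MeasureTheory.volume 0 s := by
  have hint : IntervalIntegrable (fun t : ℝ => t ^ (ε - 1)) MeasureTheory.volume 0 s :=
    intervalIntegral.intervalIntegrable_rpow' (by linarith)
  refine hint.mono_fun ?_ ?_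
  · rw [Set.uIoc_of_le hs.le]
    refine ContinuousOn.aestronglyMeasurable ?_ measurableSet_Ioc
    intro t ht
    have ht0 : 0 < t := ht.1
    have h1 : (0:ℝ) < t ^ (1 - ε) := Real.rpow_pos_of_pos ht0 _
    have h2 : (0:ℝ) < 1 + t ^ ε := by positivity
    apply ContinuousWithinAt.div continuousWithinAt_const
    · apply ContinuousWithinAt.mul
      · exact (Real.continuousAt_rpow_const t _ (Or.inl ht0.ne')).continuousWithinAt
      · exact (continuousAt_const.add (Real.continuousAt_rpow_const t _ (Or.inl ht0.ne'))).continuousWithinAt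
    · positivity
  · refine MeasureTheory.ae_restrict_of_forall_mem measurableSet_uIoc ?_
    intro t ht
    rw [Set.uIoc_of_le hs.le] at ht
    have ht0 : 0 < t := ht.1
    have h1 : (0:ℝ) < t ^ (1 - ε) := Real.rpow_pos_of_pos ht0 _
    have h2 : (0:ℝ) < 1 + t ^ ε := by positivity
    have key : 1 / (t ^ (1 - ε) * (1 + t ^ ε)) ≤ t ^ (ε - 1) := by
      have : t ^ (ε - 1) = 1 / t ^ (1 - ε) := by
        rw [one_div, ← Real.rpow_neg ht0.le, neg_sub]
      rw [this]
      apply div_le_div_of_nonneg_left one_pos.le h1 ?_ |>.trans_eq ?_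
      · nlinarith [Real.rpow_nonneg ht0.le ε, h1]
      · rfl
    have pos : 0 ≤ 1 / (t ^ (1 - ε) * (1 + t ^ ε)) := by positivity
    simp only [Real.norm_eq_abs, abs_of_nonneg pos,
      abs_of_nonneg (Real.rpow_nonneg ht0.le (ε - 1))]
    exact key

lemma integral_weight (ε : ℝ) (hε : 0 < ε) (hε1 : ε ≤ 1) (s : ℝ) (hs : 0 < s) :
    (∫ t in (0:ℝ)..s, 1 / (t ^ (1 - ε) * (1 + t ^ ε)))
      = (1 / ε) * Real.log (1 + s ^ ε) := by
  have key : (∫ t in (0:ℝ)..s, 1 / (t ^ (1 - ε) * (1 + t ^ ε)))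
      = (fun t : ℝ => (1 / ε) * Real.log (1 + t ^ ε)) s
        - (fun t : ℝ => (1 / ε) * Real.log (1 + t ^ ε)) 0 := by
    apply intervalIntegral.integral_eq_sub_of_hasDerivAt_of_le hs.le
    · apply ContinuousOn.mul continuousOn_const
      apply ContinuousOn.log
      · apply ContinuousOn.add continuousOn_const
        intro t ht
        exact (Real.continuousAt_rpow_const t ε (Or.inr hε.le)).continuousWithinAt
      · intro t ht
        have : (0:ℝ) ≤ t ^ ε := Real.rpow_nonneg ht.1 _
        positivity
    · intro t ht
      have ht0 : 0 < t := ht.1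
      have h2 : (0:ℝ) < 1 + t ^ ε := by positivity
      have hd : HasDerivAt (fun t : ℝ => 1 + t ^ ε) (ε * t ^ (ε - 1)) t :=
        (Real.hasDerivAt_rpow_const (Or.inl ht0.ne')).const_add 1
      have := ((hd.log h2.ne').const_mul (1 / ε))
      refine this.congr_deriv ?_
      have h1 : t ^ (ε - 1) = 1 / t ^ (1 - ε) := by
        rw [one_div, ← Real.rpow_neg ht0.le, neg_sub]
      field_simp [h1]
      rw [← Real.rpow_add ht0]; simp
    · exact integrable_weight ε hε hε1 s hs
  rw [key]
  simp [Real.zero_rpow hε.ne']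

lemma psi_eq (ε : ℝ) (hε : 0 < ε) (hε1 : ε ≤ 1) (ψ : ℝ → ℝ)
    (hψ : ∀ s : ℝ, ψ s =
      s * Real.exp (-∫ t in (0:ℝ)..s, 1 / (t ^ (1 - ε) * (1 + t ^ ε))))
    (s : ℝ) (hs : 0 < s) : ψ s = s * (1 + s ^ ε) ^ (-1/ε) := by
  have hp : (0:ℝ) < 1 + s ^ ε := by positivity
  rw [hψ, integral_weight ε hε hε1 s hs, Real.rpow_def_of_pos hp]
  congr 2
  ring

lemma hasDerivAt_w (ε : ℝ) (hε : 0 < ε) (s : ℝ) (hs : 0 < s) :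
    HasDerivAt (fun t : ℝ => t * (1 + t ^ ε) ^ (-1/ε)) ((1 + s ^ ε) ^ (-1/ε - 1)) s := by
  have hp : (0:ℝ) < 1 + s ^ ε := by positivity
  have h2 : HasDerivAt (fun t : ℝ => 1 + t ^ ε) (ε * s ^ (ε - 1)) s :=
    (Real.hasDerivAt_rpow_const (Or.inl hs.ne')).const_add 1
  have h3 := h2.rpow_const (p := -1/ε) (Or.inl hp.ne')
  have h4 := (hasDerivAt_id s).mul h3
  refine h4.congr_deriv ?_
  have e1 : (1 + s ^ ε) ^ (-1/ε) = (1 + s ^ ε) * (1 + s ^ ε) ^ (-1/ε - 1) := by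
    have h := Real.rpow_add hp 1 (-1/ε - 1)
    rw [Real.rpow_one] at h
    rw [← h]
    congr 1
    ring
  have e2 : s * s ^ (ε - 1) = s ^ ε := by
    nth_rewrite 1 [← Real.rpow_one s]
    rw [← Real.rpow_add hs]; ring_nf
  rw [e1, ← e2, id]
  field_simp
  ring

lemma hasDerivAt_psi (ε : ℝ) (hε : 0 < ε) (hε1 : ε ≤ 1) (ψ : ℝ → ℝ)
    (hψ : ∀ s : ℝ, ψ s =
      s * Real.exp (-∫ t in (0:ℝ)..s, 1 / (t ^ (1 - ε) * (1 + t ^ ε))))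
    (s : ℝ) (hs : 0 < s) : HasDerivAt ψ ((1 + s ^ ε) ^ (-1/ε - 1)) s := by
  have hev : ψ =ᶠ[nhds s] fun t : ℝ => t * (1 + t ^ ε) ^ (-1/ε) :=
    Filter.eventuallyEq_of_mem (isOpen_Ioi.mem_nhds hs)
      (fun t ht => psi_eq ε hε hε1 ψ hψ t ht)
  exact (hev.hasDerivAt_iff).2 (hasDerivAt_w ε hε s hs)

lemma hasDerivAt_dpsi (ε : ℝ) (hε : 0 < ε) (s : ℝ) (hs : 0 < s) :
    HasDerivAt (fun t : ℝ => (1 + t ^ ε) ^ (-1/ε - 1))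
      ((ε * s ^ (ε - 1)) * (-1/ε - 1) * (1 + s ^ ε) ^ (-1/ε - 1 - 1)) s := by
  have hp : (0:ℝ) < 1 + s ^ ε := by positivity
  have h2 : HasDerivAt (fun t : ℝ => 1 + t ^ ε) (ε * s ^ (ε - 1)) s :=
    (Real.hasDerivAt_rpow_const (Or.inl hs.ne')).const_add 1
  exact h2.rpow_const (p := -1/ε - 1) (Or.inl hp.ne')

lemma phi_eq (ε : ℝ) (hε : 0 < ε) (hε1 : ε ≤ 1) (ψ φ : ℝ → ℝ)
    (hψ : ∀ s : ℝ, ψ s =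
      s * Real.exp (-∫ t in (0:ℝ)..s, 1 / (t ^ (1 - ε) * (1 + t ^ ε))))
    (hφ : ∀ s : ℝ, 0 < s → φ s = ψ s / (s * deriv ψ s))
    (s : ℝ) (hs : 0 < s) : φ s = 1 + s ^ ε := by
  have hp : (0:ℝ) < 1 + s ^ ε := by positivity
  have hq : (0:ℝ) < (1 + s ^ ε) ^ (-1/ε - 1) := Real.rpow_pos_of_pos hp _
  have e1 : (1 + s ^ ε) ^ (-1/ε) = (1 + s ^ ε) * (1 + s ^ ε) ^ (-1/ε - 1) := by
    have h := Real.rpow_add hp 1 (-1/ε - 1)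
    rw [Real.rpow_one] at h
    rw [← h]
    congr 1
    ring
  rw [hφ s hs, (hasDerivAt_psi ε hε hε1 ψ hψ s hs).deriv, psi_eq ε hε hε1 ψ hψ s hs, e1]
  field_simp

lemma deriv_phi (ε : ℝ) (hε : 0 < ε) (hε1 : ε ≤ 1) (ψ φ : ℝ → ℝ)
    (hψ : ∀ s : ℝ, ψ s =
      s * Real.exp (-∫ t in (0:ℝ)..s, 1 / (t ^ (1 - ε) * (1 + t ^ ε))))
    (hφ : ∀ s : ℝ, 0 < s → φ s = ψ s / (s * deriv ψ s))
    (s : ℝ) (hs : 0 < s) : deriv φ s = ε * s ^ (ε - 1) := by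
  have hev : φ =ᶠ[nhds s] fun t : ℝ => 1 + t ^ ε :=
    Filter.eventuallyEq_of_mem (isOpen_Ioi.mem_nhds hs)
      (fun t ht => phi_eq ε hε hε1 ψ φ hψ hφ t ht)
  rw [hev.deriv_eq]
  exact ((Real.hasDerivAt_rpow_const (Or.inl hs.ne')).const_add 1).deriv

/-- F_{ψ(v)}^g = φ(v) F_v^g − φ'(v) v, where ψ is the singular weight with
    parameter ε ∈ (0,1] and φ(s) = ψ(s)/(sψ'(s)). -/
theorem Fv_comp_psi
    (ε : ℝ) (hε : 0 < ε) (hε1 : ε ≤ 1)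
    (ψ φ : ℝ → ℝ)
    (hψ : ∀ s : ℝ, ψ s =
      s * Real.exp (-∫ t in (0:ℝ)..s, 1 / (t ^ (1 - ε) * (1 + t ^ ε))))
    (hφ : ∀ s : ℝ, 0 < s → φ s = ψ s / (s * deriv ψ s))
    (ginv : (Fin n → ℝ) → Matrix (Fin n) (Fin n) ℝ)
    (hsym : ∀ x i j, ginv x i j = ginv x j i)
    (hell : ∀ (x : Fin n → ℝ) (ξ : Fin n → ℝ), ξ ≠ 0 → 0 < ∑ i, ∑ j, ginv x i j * ξ i * ξ j)
    (hg : ∀ i j, ContDiffOn ℝ 1 (fun x => ginv x i j) {x : Fin n → ℝ | x ≠ 0})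
    (v : (Fin n → ℝ) → ℝ)
    (hv : ContDiffOn ℝ 2 v {x : Fin n → ℝ | x ≠ 0})
    (hvpos : ∀ x : Fin n → ℝ, x ≠ 0 → 0 < v x)
    (hgrad : ∀ x : Fin n → ℝ, x ≠ 0 → gPair ginv v v x ≠ 0)
    (x : Fin n → ℝ) (hx : x ≠ 0) :
    Fv ginv (fun y => ψ (v y)) x = φ (v x) * Fv ginv v x - deriv φ (v x) * v x := by
  
  have hU : IsOpen {y : Fin n → ℝ | y ≠ 0} := isOpen_ne
  have hUx : {y : Fin n → ℝ | y ≠ 0} ∈ nhds x := hU.mem_nhds hx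
  set a := v x with ha
  have hapos : 0 < a := hvpos x hx
  set dψ : ℝ → ℝ := fun s => (1 + s ^ ε) ^ (-1/ε - 1) with hdψdef
  set d2 : ℝ := (ε * a ^ (ε - 1)) * (-1/ε - 1) * (1 + a ^ ε) ^ (-1/ε - 1 - 1) with hd2def
  have hvdiff : ∀ y : Fin n → ℝ, y ≠ 0 → DifferentiableAt ℝ v y := fun y hy =>
    (hv.contDiffAt (hU.mem_nhds hy)).differentiableAt (by norm_num)
  -- chain rule for first derivatives
  have hpd : ∀ (y : Fin n → ℝ), y ≠ 0 → ∀ j,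
      pd j (fun z => ψ (v z)) y = dψ (v y) * pd j v y := by
    intro y hy j
    have hc : HasFDerivAt (fun z => ψ (v z)) (dψ (v y) • fderiv ℝ v y) y :=
      HasDerivAt.comp_hasFDerivAt y (hasDerivAt_psi ε hε hε1 ψ hψ (v y) (hvpos y hy))
        (hvdiff y hy).hasFDerivAt
    show fderiv ℝ (fun z => ψ (v z)) y (Pi.single j 1) = _
    rw [hc.fderiv]
    simp [pd]
  -- gPair of the composition
  have hPair : gPair ginv (fun y => ψ (v y)) (fun y => ψ (v y)) x
      = dψ a ^ 2 * gPair ginv v v x := by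
    unfold gPair
    rw [Finset.mul_sum]
    refine Finset.sum_congr rfl fun i _ => ?_
    rw [Finset.mul_sum]
    refine Finset.sum_congr rfl fun j _ => ?_
    rw [hpd x hx i, hpd x hx j]
    ring
  -- differentiability of the pieces
  have hpdv : ∀ j : Fin n, DifferentiableAt ℝ (fun y => pd j v y) x := by
    intro j
    have h2 : ContDiffAt ℝ 2 v x := hv.contDiffAt hUx
    have h1 : ContDiffAt ℝ 1 (fderiv ℝ v) x := h2.fderiv_right (by norm_num)
    exact (h1.clm_apply contDiffAt_const).differentiableAt one_ne_zero
  have hgdiff : ∀ i j : Fin n, DifferentiableAt ℝ (fun y => ginv y i j) x := fun i j =>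
    ((hg i j).contDiffAt hUx).differentiableAt one_ne_zero
  have hGdiff : ∀ i : Fin n, DifferentiableAt ℝ (fun y => gGrad ginv v y i) x := by
    intro i
    exact DifferentiableAt.fun_sum fun j _ => (hgdiff i j).mul (hpdv j)
  have hd2 : HasFDerivAt (fun y => dψ (v y)) (d2 • fderiv ℝ v x) x :=
    HasDerivAt.comp_hasFDerivAt x (hasDerivAt_dpsi ε hε a hapos) (hvdiff x hx).hasFDerivAt
  have hdψvdiff : DifferentiableAt ℝ (fun y => dψ (v y)) x := hd2.differentiableAt
  -- gLap of the composition
  have hsumQ : ∑ i, pd i v x * gGrad ginv v x i = gPair ginv v v x := by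
    unfold gGrad gPair
    refine Finset.sum_congr rfl fun i _ => ?_
    rw [Finset.mul_sum]
    refine Finset.sum_congr rfl fun j _ => ?_
    ring
  have hLap : gLap ginv (fun y => ψ (v y)) x
      = dψ a * gLap ginv v x + d2 * gPair ginv v v x := by
    have key : ∀ i : Fin n, pd i (fun y => gGrad ginv (fun z => ψ (v z)) y i) x
        = d2 * pd i v x * gGrad ginv v x i
          + dψ a * pd i (fun y => gGrad ginv v y i) x := by
      intro i
      have hev : (fun y => gGrad ginv (fun z => ψ (v z)) y i) =ᶠ[nhds x]
          (fun y => dψ (v y) * gGrad ginv v y i) := by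
        filter_upwards [hUx] with y hy
        unfold gGrad
        rw [Finset.mul_sum]
        exact Finset.sum_congr rfl fun j _ => by rw [hpd y hy j]; ring
      show fderiv ℝ (fun y => gGrad ginv (fun z => ψ (v z)) y i) x (Pi.single i 1) = _
      rw [hev.fderiv_eq, fderiv_fun_mul hdψvdiff (hGdiff i), hd2.fderiv]
      simp only [ContinuousLinearMap.add_apply, ContinuousLinearMap.smul_apply,
        smul_eq_mul]
      unfold pd
      ring
    unfold gLap vdiv
    calc (∑ i, pd i (fun y => gGrad ginv (fun z => ψ (v z)) y i) x)
        = ∑ i, (d2 * pd i v x * gGrad ginv v x i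
            + dψ a * pd i (fun y => gGrad ginv v y i) x) :=
          Finset.sum_congr rfl fun i _ => key i
      _ = d2 * ∑ i, pd i v x * gGrad ginv v x i
            + dψ a * ∑ i, pd i (fun y => gGrad ginv v y i) x := by
          rw [Finset.sum_add_distrib, Finset.mul_sum, Finset.mul_sum]
          congr 1
          exact Finset.sum_congr rfl fun i _ => mul_assoc _ _ _
      _ = dψ a * gLap ginv v x + d2 * gPair ginv v v x := by
          rw [hsumQ, add_comm]
          unfold gLap vdiv
          rfl
  -- final algebra
  have hQ : gPair ginv v v x ≠ 0 := hgrad x hx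
  have hp0 : (0:ℝ) < 1 + a ^ ε := by positivity
  have hq0 : (0:ℝ) < (1 + a ^ ε) ^ (-1/ε - 1) := Real.rpow_pos_of_pos hp0 _
  have eA : (1 + a ^ ε) ^ (-1/ε) = (1 + a ^ ε) * (1 + a ^ ε) ^ (-1/ε - 1) := by
    have h := Real.rpow_add hp0 1 (-1/ε - 1)
    rw [Real.rpow_one] at h
    rw [← h]
    congr 1
    ring
  have eB : (1 + a ^ ε) ^ (-1/ε - 1 - 1)
      = (1 + a ^ ε) ^ (-1/ε - 1) / (1 + a ^ ε) := by
    rw [Real.rpow_sub hp0, Real.rpow_one]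
  have eC : a ^ ε = a * a ^ (ε - 1) := by
    have h := Real.rpow_add hapos 1 (ε - 1)
    rw [Real.rpow_one] at h
    rw [← h]
    congr 1
    ring
  unfold Fv
  show ψ a * gLap ginv (fun y => ψ (v y)) x
      / gPair ginv (fun y => ψ (v y)) (fun y => ψ (v y)) x - 1 = _
  rw [hPair, hLap, psi_eq ε hε hε1 ψ hψ a hapos,
    phi_eq ε hε hε1 ψ φ hψ hφ a hapos, deriv_phi ε hε hε1 ψ φ hψ hφ a hapos,
    hdψdef, hd2def]
  rw [eA, eB]
  simp only [eC]
  have hp0' : (0:ℝ) < 1 + a * a ^ (ε - 1) := by rw [← eC]; exact hp0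
  have hq0' : (0:ℝ) < (1 + a * a ^ (ε - 1)) ^ (-1/ε - 1) := by rw [← eC]; exact hq0
  set b := a ^ (ε - 1) with hbdef
  set P := (1 + a * b) ^ (-1/ε - 1) with hPdef
  field_simp
  ring
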